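/- Let C1, …, C_{j−1}, C_j, C_m be distinct items and consider a uniformly random permutation of all m items. Conditioned on the event that exactly s of the items C1, …, C_{j−1} precede C_m, the probability that C_j also precedes C_m equals (s+1)/(j+1). -/

import Mathlib

open Finset Equiv

namespace Stmt7Aux

variable {m j : ℕ}

/-- count of a filter of values `< t` in `Fin m`. -/
lemma card_filter_val_lt (m t : ℕ) (h : t ≤ m) :
    ((Finset.univ : Finset (Fin m)).filter fun i : Fin m => (i : ℕ) < t).card = t := by
  rw [← Finset.card_range t]
  apply Finset.card_bij (fun (i : Fin m) _ => (i : ℕ))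
  · intro a ha
    simp only [mem_filter] at ha
    simpa using ha.2
  · intro a _ b _ hab
    exact Fin.ext hab
  · intro b hb
    simp only [mem_range] at hb
    exact ⟨⟨b, lt_of_lt_of_le hb h⟩, by simp [hb], rfl⟩

lemma card_filter_lt_fin {n : ℕ} (t : Fin n) :
    ((Finset.univ : Finset (Fin n)).filter fun y => y < t).card = (t : ℕ) := by
  rw [← card_filter_val_lt n t t.isLt.le]
  congr 1

/-- the cycle moving rank `r` to rank `t`, order preserving elsewhere -/
def rrho {n : ℕ} (r t : Fin (n + 1)) : Equiv.Perm (Fin (n + 1)) :=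
  (Fin.cycleRange t)⁻¹ * Fin.cycleRange r

lemma rrho_apply_self {n : ℕ} (r t : Fin (n + 1)) : rrho r t r = t := by
  simp only [rrho, Equiv.Perm.mul_apply, Fin.cycleRange_self]
  rw [← Fin.cycleRange_self t, Equiv.Perm.coe_inv, Equiv.symm_apply_apply]

lemma cycleRange_mono_off {n : ℕ} {r x y : Fin (n + 1)} (hx : x ≠ r) (hy : y ≠ r)
    (h : x < y) : Fin.cycleRange r x < Fin.cycleRange r y := by
  rcases lt_or_gt_of_ne hx with hxr | hxr
  · rcases lt_or_gt_of_ne hy with hyr | hyr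
    · have h1 := Fin.coe_cycleRange_of_lt hxr
      have h2 := Fin.coe_cycleRange_of_lt hyr
      rw [Fin.lt_def, h1, h2]
      exact Nat.add_lt_add_right h 1
    · have h1 := Fin.coe_cycleRange_of_lt hxr
      have h2 := Fin.cycleRange_of_gt hyr
      rw [Fin.lt_def, h1, h2]
      have : (x : ℕ) + 1 ≤ (r : ℕ) := hxr
      exact lt_of_le_of_lt this hyr
  · have hyr : r < y := lt_trans hxr h
    rw [Fin.cycleRange_of_gt hxr, Fin.cycleRange_of_gt hyr]
    exact h

lemma perm_inv_mono_off {n : ℕ} (σ : Equiv.Perm (Fin n)) (r : Fin n)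
    (H : ∀ x y, x ≠ r → y ≠ r → x < y → σ x < σ y)
    {u v : Fin n} (hu : u ≠ σ r) (hv : v ≠ σ r) (huv : u < v) : σ⁻¹ u < σ⁻¹ v := by
  have ha : σ⁻¹ u ≠ r := fun h => hu (by rw [← h, Equiv.Perm.coe_inv, Equiv.apply_symm_apply])
  have hb : σ⁻¹ v ≠ r := fun h => hv (by rw [← h, Equiv.Perm.coe_inv, Equiv.apply_symm_apply])
  rcases lt_trichotomy (σ⁻¹ u) (σ⁻¹ v) with h | h | h
  · exact h
  · exact absurd (σ⁻¹.injective h) (by intro he; rw [he] at huv; exact lt_irrefl _ huv)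
  · exfalso
    have := H _ _ hb ha h
    rw [Equiv.Perm.coe_inv, Equiv.apply_symm_apply, Equiv.apply_symm_apply] at this
    exact absurd huv (not_lt_of_gt this)

lemma rrho_mono_off {n : ℕ} {r x y : Fin (n + 1)} (t : Fin (n + 1)) (hx : x ≠ r) (hy : y ≠ r)
    (h : x < y) : rrho r t x < rrho r t y := by
  have h1 : Fin.cycleRange r x ≠ 0 := by
    rw [← Fin.cycleRange_self r]
    exact fun he => hx ((Fin.cycleRange r).injective he)
  have h2 : Fin.cycleRange r y ≠ 0 := by
    rw [← Fin.cycleRange_self r]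
    exact fun he => hy ((Fin.cycleRange r).injective he)
  have hlt : Fin.cycleRange r x < Fin.cycleRange r y := cycleRange_mono_off hx hy h
  have h0 : (0 : Fin (n+1)) = Fin.cycleRange t t := (Fin.cycleRange_self t).symm
  exact perm_inv_mono_off (Fin.cycleRange t) t
    (fun a b ha hb hab => cycleRange_mono_off ha hb hab)
    (by rw [← h0]; exact h1) (by rw [← h0]; exact h2) hlt

lemma rrho_lt_iff {n : ℕ} {r x y : Fin (n + 1)} (t : Fin (n + 1)) (hx : x ≠ r) (hy : y ≠ r) :
    rrho r t x < rrho r t y ↔ x < y := by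
  constructor
  · intro h
    rcases lt_trichotomy x y with h' | h' | h'
    · exact h'
    · rw [h'] at h; exact absurd h (lt_irrefl _)
    · exact absurd h (not_lt_of_gt (rrho_mono_off t hy hx h'))
  · exact rrho_mono_off t hx hy

lemma rrho_rrho {n : ℕ} (r t t' x : Fin (n + 1)) :
    rrho t t' (rrho r t x) = rrho r t' x := by
  simp only [rrho, Equiv.Perm.mul_apply, Equiv.Perm.coe_inv, Equiv.apply_symm_apply]

lemma rrho_self {n : ℕ} (r : Fin (n + 1)) : rrho r r = 1 := by
  simp [rrho]


variable (m j : ℕ)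

def zz (hm : j + 1 ≤ m) : Fin m := ⟨m - 1, by omega⟩
def aa (hm : j + 1 ≤ m) : Fin m := ⟨j - 1, by omega⟩

def pS (i : Fin m) : Prop := (i : ℕ) < j ∨ (i : ℕ) = m - 1

instance (i : Fin m) : Decidable (pS m j i) := by unfold pS; infer_instance

def SS : Finset (Fin m) := Finset.univ.filter (pS m j)

variable {m j}

lemma aa_ne_zz (hj : 1 ≤ j) (hm : j + 1 ≤ m) : aa m j hm ≠ zz m j hm := by
  simp only [aa, zz, ne_eq, Fin.mk.injEq]
  omega

lemma pS_aa (hj : 1 ≤ j) (hm : j + 1 ≤ m) : pS m j (aa m j hm) := by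
  left; simp only [aa]; omega

lemma pS_zz (hm : j + 1 ≤ m) : pS m j (zz m j hm) := by
  right; simp [zz]

lemma pS_counted {c : Fin m} (h : (c : ℕ) < j - 1) : pS m j c := by
  left; omega

lemma counted_ne_aa (hm : j + 1 ≤ m) {c : Fin m} (h : (c : ℕ) < j - 1) : c ≠ aa m j hm := by
  simp only [aa, ne_eq, Fin.ext_iff]; omega

lemma zz_ne_aa (hj : 1 ≤ j) (hm : j + 1 ≤ m) : zz m j hm ≠ aa m j hm :=
  (aa_ne_zz hj hm).symm

lemma card_SS (hj : 1 ≤ j) (hm : j + 1 ≤ m) : (SS m j).card = j + 1 := by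
  have : SS m j = (Finset.univ.filter fun i : Fin m => (i : ℕ) < j) ∪ {zz m j hm} := by
    ext i
    simp only [SS, pS, mem_filter, mem_univ, true_and, mem_union, mem_singleton, zz,
      Fin.ext_iff]
  rw [this, Finset.card_union_of_disjoint, card_filter_val_lt m j (by omega),
    Finset.card_singleton]
  · simp only [Finset.disjoint_singleton_right, mem_filter, mem_univ, true_and, zz]
    omega

variable (j) in
def Vv (π : Equiv.Perm (Fin m)) : Finset (Fin m) := (SS m j).image π

lemma card_Vv (hj : 1 ≤ j) (hm : j + 1 ≤ m) (π : Equiv.Perm (Fin m)) :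
    (Vv j π).card = j + 1 := by
  rw [Vv, Finset.card_image_of_injective _ π.injective, card_SS hj hm]

lemma mem_Vv {π : Equiv.Perm (Fin m)} {i : Fin m} (h : pS m j i) : π i ∈ Vv j π :=
  Finset.mem_image_of_mem _ (Finset.mem_filter.2 ⟨Finset.mem_univ _, h⟩)

/-- the order isomorphism enumerating the special values -/
def oo (hj : 1 ≤ j) (hm : j + 1 ≤ m) (π : Equiv.Perm (Fin m)) :
    Fin (j + 1) ≃o {x // x ∈ Vv j π} :=
  (Vv j π).orderIsoOfFin (card_Vv hj hm π)

/-- the rank of the value of `aa` among the special values -/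
def Rfin (hj : 1 ≤ j) (hm : j + 1 ≤ m) (π : Equiv.Perm (Fin m)) : Fin (j + 1) :=
  (oo hj hm π).symm ⟨π (aa m j hm), mem_Vv (pS_aa hj hm)⟩

/-- reinsertion of the value of `aa` at rank `t` -/
def reins (hj : 1 ≤ j) (hm : j + 1 ≤ m) (π : Equiv.Perm (Fin m)) (t : Fin (j + 1)) :
    Equiv.Perm (Fin m) :=
  ((rrho (Rfin hj hm π) t).extendDomain (oo hj hm π).toEquiv) * π

lemma not_mem_Vv {π : Equiv.Perm (Fin m)} {i : Fin m} (h : ¬ pS m j i) : π i ∉ Vv j π := by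
  intro hmem
  rw [Vv, Finset.mem_image] at hmem
  obtain ⟨i', hi', he⟩ := hmem
  rw [π.injective he] at hi'
  exact h (Finset.mem_filter.1 hi').2

lemma reins_apply_not_special (hj : 1 ≤ j) (hm : j + 1 ≤ m) (π : Equiv.Perm (Fin m))
    (t : Fin (j + 1)) {i : Fin m} (h : ¬ pS m j i) : reins hj hm π t i = π i := by
  rw [reins, Equiv.Perm.mul_apply]
  exact Equiv.Perm.extendDomain_apply_not_subtype _ _ (not_mem_Vv h)

lemma reins_apply_special (hj : 1 ≤ j) (hm : j + 1 ≤ m) (π : Equiv.Perm (Fin m))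
    (t : Fin (j + 1)) {i : Fin m} (h : pS m j i) :
    reins hj hm π t i =
      ((oo hj hm π) ((rrho (Rfin hj hm π) t)
        ((oo hj hm π).symm ⟨π i, mem_Vv h⟩)) : Fin m) := by
  rw [reins, Equiv.Perm.mul_apply]
  rw [Equiv.Perm.extendDomain_apply_subtype _ _ (mem_Vv h)]
  rfl

lemma oo_symm_lt_iff (hj : 1 ≤ j) (hm : j + 1 ≤ m) (π : Equiv.Perm (Fin m))
    {v w : Fin m} (hv : v ∈ Vv j π) (hw : w ∈ Vv j π) :
    (oo hj hm π).symm ⟨v, hv⟩ < (oo hj hm π).symm ⟨w, hw⟩ ↔ v < w := by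
  rw [(oo hj hm π).symm.lt_iff_lt]
  exact Iff.rfl

lemma oo_symm_ne (hj : 1 ≤ j) (hm : j + 1 ≤ m) (π : Equiv.Perm (Fin m))
    {i : Fin m} (h : pS m j i) (hne : i ≠ aa m j hm) :
    (oo hj hm π).symm ⟨π i, mem_Vv h⟩ ≠ Rfin hj hm π := by
  intro he
  rw [Rfin] at he
  have := (oo hj hm π).symm.injective he
  have h2 : π i = π (aa m j hm) := congrArg Subtype.val this
  exact hne (π.injective h2)

lemma reins_lt_iff (hj : 1 ≤ j) (hm : j + 1 ≤ m) (π : Equiv.Perm (Fin m)) (t : Fin (j + 1))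
    {i i' : Fin m} (h : pS m j i) (h' : pS m j i') (hia : i ≠ aa m j hm)
    (hia' : i' ≠ aa m j hm) :
    reins hj hm π t i < reins hj hm π t i' ↔ π i < π i' := by
  rw [reins_apply_special hj hm π t h, reins_apply_special hj hm π t h']
  have h1 : ∀ u v : {x // x ∈ Vv j π}, (u : Fin m) < v ↔ u < v := fun u v => Iff.rfl
  rw [h1, (oo hj hm π).lt_iff_lt,
    rrho_lt_iff t (oo_symm_ne hj hm π h hia) (oo_symm_ne hj hm π h' hia'),
    oo_symm_lt_iff]

lemma reins_apply_aa (hj : 1 ≤ j) (hm : j + 1 ≤ m) (π : Equiv.Perm (Fin m)) (t : Fin (j + 1)) :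
    reins hj hm π t (aa m j hm) = ((oo hj hm π) t : Fin m) := by
  rw [reins_apply_special hj hm π t (pS_aa hj hm)]
  rw [show (oo hj hm π).symm ⟨π (aa m j hm), mem_Vv (pS_aa hj hm)⟩ = Rfin hj hm π from rfl]
  rw [rrho_apply_self]

variable (m j) in
def nn (hm : j + 1 ≤ m) (π : Equiv.Perm (Fin m)) : ℕ :=
  (Finset.univ.filter fun c : Fin m => (c : ℕ) < j - 1 ∧ π c < π (zz m j hm)).card

variable (m j) in
def Rnat (hm : j + 1 ≤ m) (π : Equiv.Perm (Fin m)) : ℕ :=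
  (Finset.univ.filter fun i : Fin m =>
    ((i : ℕ) < j - 1 ∨ (i : ℕ) = m - 1) ∧ π i < π (aa m j hm)).card

lemma nn_reins (hj : 1 ≤ j) (hm : j + 1 ≤ m) (π : Equiv.Perm (Fin m)) (t : Fin (j + 1)) :
    nn m j hm (reins hj hm π t) = nn m j hm π := by
  unfold nn
  congr 1
  apply Finset.filter_congr
  intro c _
  constructor
  · rintro ⟨hc, hlt⟩
    refine ⟨hc, ?_⟩
    rwa [reins_lt_iff hj hm π t (pS_counted hc) (pS_zz hm) (counted_ne_aa hm hc)
      (zz_ne_aa hj hm)] at hlt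
  · rintro ⟨hc, hlt⟩
    refine ⟨hc, ?_⟩
    rwa [reins_lt_iff hj hm π t (pS_counted hc) (pS_zz hm) (counted_ne_aa hm hc)
      (zz_ne_aa hj hm)]

lemma pSna_iff (hj : 1 ≤ j) (hm : j + 1 ≤ m) {i : Fin m} :
    ((i : ℕ) < j - 1 ∨ (i : ℕ) = m - 1) ↔ (pS m j i ∧ i ≠ aa m j hm) := by
  have hi := i.isLt
  simp only [pS, aa, ne_eq, Fin.ext_iff]
  omega

lemma Rnat_eq_Rfin (hj : 1 ≤ j) (hm : j + 1 ≤ m) (π : Equiv.Perm (Fin m)) :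
    Rnat m j hm π = (Rfin hj hm π : ℕ) := by
  rw [Rnat, ← card_filter_lt_fin (Rfin hj hm π)]
  apply Finset.card_bij (fun (i : Fin m) hi =>
    (oo hj hm π).symm ⟨π i, mem_Vv (by
      have := (Finset.mem_filter.1 hi).2.1
      exact ((pSna_iff hj hm).1 this).1)⟩)
  · intro i hi
    simp only [Finset.mem_filter, Finset.mem_univ, true_and] at hi ⊢
    rw [Rfin, oo_symm_lt_iff]
    exact hi.2
  · intro i hi i' hi' he
    have := (oo hj hm π).symm.injective he
    have h2 : π i = π i' := congrArg Subtype.val this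
    exact π.injective h2
  · intro y hy
    simp only [Finset.mem_filter, Finset.mem_univ, true_and] at hy
    -- obtain the special index whose value has rank y
    have hmem : ((oo hj hm π y : Fin m)) ∈ Vv j π := (oo hj hm π y).2
    simp only [Vv, Finset.mem_image] at hmem
    obtain ⟨i, hiS, hie⟩ := hmem
    have hpS : pS m j i := (Finset.mem_filter.1 hiS).2
    have hsymm : (oo hj hm π).symm ⟨π i, mem_Vv hpS⟩ = y := by
      rw [show (⟨π i, mem_Vv hpS⟩ : {x // x ∈ Vv j π}) = oo hj hm π y from
        Subtype.ext hie]
      exact (oo hj hm π).symm_apply_apply y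
    have hia : i ≠ aa m j hm := by
      intro he
      subst he
      have h3 : Rfin hj hm π = y := hsymm
      rw [h3] at hy
      exact lt_irrefl _ hy
    refine ⟨i, ?_, hsymm⟩
    simp only [Finset.mem_filter, Finset.mem_univ, true_and]
    refine ⟨(pSna_iff hj hm).2 ⟨hpS, hia⟩, ?_⟩
    rw [← oo_symm_lt_iff hj hm π (mem_Vv hpS) (mem_Vv (pS_aa hj hm))]
    rw [show (oo hj hm π).symm ⟨π (aa m j hm), mem_Vv (pS_aa hj hm)⟩ = Rfin hj hm π from rfl]
    rw [hsymm]
    exact hy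

lemma Vv_reins (hj : 1 ≤ j) (hm : j + 1 ≤ m) (π : Equiv.Perm (Fin m)) (t : Fin (j + 1)) :
    Vv j (reins hj hm π t) = Vv j π := by
  set c := (rrho (Rfin hj hm π) t).extendDomain (oo hj hm π).toEquiv with hc
  have himg : Vv j (reins hj hm π t) = (Vv j π).image c := by
    simp only [Vv, reins, ← hc]
    rw [Finset.image_image]
    rfl
  rw [himg]
  apply Finset.eq_of_subset_of_card_le
  · intro v hv
    rw [Finset.mem_image] at hv
    obtain ⟨w, hw, rfl⟩ := hv
    rw [hc, Equiv.Perm.extendDomain_apply_subtype _ _ hw]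
    exact Subtype.coe_prop _
  · rw [Finset.card_image_of_injective _ c.injective]

lemma orderIsoOfFin_symm_congr {α : Type*} [LinearOrder α] {s t : Finset α} (h : s = t)
    {k : ℕ} (hs : s.card = k) (ht : t.card = k) (v : α) (hv : v ∈ s) (hv' : v ∈ t) :
    (s.orderIsoOfFin hs).symm ⟨v, hv⟩ = (t.orderIsoOfFin ht).symm ⟨v, hv'⟩ := by
  subst h; rfl

lemma orderIsoOfFin_congr {α : Type*} [LinearOrder α] {s t : Finset α} (h : s = t)
    {k : ℕ} (hs : s.card = k) (ht : t.card = k) (y : Fin k) :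
    ((s.orderIsoOfFin hs) y : α) = ((t.orderIsoOfFin ht) y : α) := by
  subst h; rfl

lemma oo_symm_congr (hj : 1 ≤ j) (hm : j + 1 ≤ m) {π π' : Equiv.Perm (Fin m)}
    (h : Vv j π' = Vv j π) (v : Fin m) (hv : v ∈ Vv j π') (hv' : v ∈ Vv j π) :
    (oo hj hm π').symm ⟨v, hv⟩ = (oo hj hm π).symm ⟨v, hv'⟩ :=
  orderIsoOfFin_symm_congr h _ _ v hv hv'

lemma oo_congr (hj : 1 ≤ j) (hm : j + 1 ≤ m) {π π' : Equiv.Perm (Fin m)}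
    (h : Vv j π' = Vv j π) (y : Fin (j + 1)) :
    ((oo hj hm π') y : Fin m) = ((oo hj hm π) y : Fin m) :=
  orderIsoOfFin_congr h _ _ y

lemma Rfin_reins (hj : 1 ≤ j) (hm : j + 1 ≤ m) (π : Equiv.Perm (Fin m)) (t : Fin (j + 1)) :
    Rfin hj hm (reins hj hm π t) = t := by
  have hV := Vv_reins hj hm π t
  have haa : reins hj hm π t (aa m j hm) = ((oo hj hm π) t : Fin m) :=
    reins_apply_aa hj hm π t
  rw [Rfin]
  rw [oo_symm_congr hj hm hV _ _ (by rw [haa]; exact Subtype.coe_prop _)]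
  rw [show (⟨reins hj hm π t (aa m j hm), _⟩ : {x // x ∈ Vv j π}) = (oo hj hm π) t from
    Subtype.ext haa]
  exact (oo hj hm π).symm_apply_apply t

lemma reins_reins (hj : 1 ≤ j) (hm : j + 1 ≤ m) (π : Equiv.Perm (Fin m)) (t t' : Fin (j + 1)) :
    reins hj hm (reins hj hm π t) t' = reins hj hm π t' := by
  have hV := Vv_reins hj hm π t
  apply Equiv.ext
  intro i
  by_cases h : pS m j i
  · rw [reins_apply_special hj hm _ t' h, reins_apply_special hj hm π t' h]
    rw [Rfin_reins hj hm π t]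
    have hri : reins hj hm π t i = ((oo hj hm π) ((rrho (Rfin hj hm π) t)
        ((oo hj hm π).symm ⟨π i, mem_Vv h⟩)) : Fin m) := reins_apply_special hj hm π t h
    rw [oo_symm_congr hj hm hV _ _ (by rw [hri]; exact Subtype.coe_prop _)]
    rw [show (⟨reins hj hm π t i, _⟩ : {x // x ∈ Vv j π}) =
      (oo hj hm π) ((rrho (Rfin hj hm π) t) ((oo hj hm π).symm ⟨π i, mem_Vv h⟩)) from
      Subtype.ext hri]
    rw [(oo hj hm π).symm_apply_apply]
    rw [oo_congr hj hm hV]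
    rw [rrho_rrho]
  · rw [reins_apply_not_special hj hm _ t' h, reins_apply_not_special hj hm π t' h,
      reins_apply_not_special hj hm π t h]

lemma reins_Rfin (hj : 1 ≤ j) (hm : j + 1 ≤ m) (π : Equiv.Perm (Fin m)) :
    reins hj hm π (Rfin hj hm π) = π := by
  rw [reins, rrho_self, Equiv.Perm.extendDomain_one, one_mul]

lemma below_iff (hj : 1 ≤ j) (hm : j + 1 ≤ m) (π : Equiv.Perm (Fin m)) :
    π (aa m j hm) < π (zz m j hm) ↔ Rnat m j hm π ≤ nn m j hm π := by
  constructor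
  · intro h
    apply Finset.card_le_card
    intro i hi
    simp only [Finset.mem_filter, Finset.mem_univ, true_and] at hi ⊢
    obtain ⟨hna, hlt⟩ := hi
    rcases hna with hc | hz
    · exact ⟨hc, lt_trans hlt h⟩
    · exfalso
      have : i = zz m j hm := Fin.ext hz
      rw [this] at hlt
      exact absurd h (not_lt_of_gt hlt)
  · intro h
    by_contra hnot
    have hne : π (aa m j hm) ≠ π (zz m j hm) := fun he =>
      (aa_ne_zz hj hm) (π.injective he)
    have hza : π (zz m j hm) < π (aa m j hm) := by
      rcases lt_trichotomy (π (aa m j hm)) (π (zz m j hm)) with h' | h' | h'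
      · exact absurd h' hnot
      · exact absurd h' hne
      · exact h'
    have hsub : (Finset.univ.filter fun c : Fin m => (c : ℕ) < j - 1 ∧ π c < π (zz m j hm))
        ⊂ (Finset.univ.filter fun i : Fin m =>
          ((i : ℕ) < j - 1 ∨ (i : ℕ) = m - 1) ∧ π i < π (aa m j hm)) := by
      constructor
      · intro c hc
        simp only [Finset.mem_filter, Finset.mem_univ, true_and] at hc ⊢
        exact ⟨Or.inl hc.1, lt_trans hc.2 hza⟩
      · intro hcontra
        have hzmem : zz m j hm ∈ (Finset.univ.filter fun i : Fin m =>
            ((i : ℕ) < j - 1 ∨ (i : ℕ) = m - 1) ∧ π i < π (aa m j hm)) := by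
          simp only [Finset.mem_filter, Finset.mem_univ, true_and]
          exact ⟨Or.inr rfl, hza⟩
        have := hcontra hzmem
        simp only [Finset.mem_filter_univ, Finset.mem_filter, Finset.mem_univ, true_and, zz] at this
        have h5 : m - 1 < j - 1 := (Finset.mem_filter.1 this).2.1
        omega
    have := Finset.card_lt_card hsub
    rw [show (Finset.univ.filter fun c : Fin m =>
      (c : ℕ) < j - 1 ∧ π c < π (zz m j hm)).card = nn m j hm π from rfl] at this
    rw [show (Finset.univ.filter fun i : Fin m =>
      ((i : ℕ) < j - 1 ∨ (i : ℕ) = m - 1) ∧ π i < π (aa m j hm)).card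
        = Rnat m j hm π from rfl] at this
    omega

lemma Rnat_reins (hj : 1 ≤ j) (hm : j + 1 ≤ m) (π : Equiv.Perm (Fin m)) (t : Fin (j + 1)) :
    Rnat m j hm (reins hj hm π t) = (t : ℕ) := by
  rw [Rnat_eq_Rfin hj hm, Rfin_reins]

lemma Rfin_eq_zero_of_Rnat (hj : 1 ≤ j) (hm : j + 1 ≤ m) {π : Equiv.Perm (Fin m)}
    (h : Rnat m j hm π = 0) : Rfin hj hm π = 0 := by
  apply Fin.ext
  rw [← Rnat_eq_Rfin hj hm, h]
  rfl

variable (m j) in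
/-- The equivalence showing `|A| = |Abar| * (j+1)`. -/
def eqA (s : ℕ) (hj : 1 ≤ j) (hm : j + 1 ≤ m) :
    {π : Equiv.Perm (Fin m) // nn m j hm π = s} ≃
      {π : Equiv.Perm (Fin m) // nn m j hm π = s ∧ Rnat m j hm π = 0} × Fin (j + 1) where
  toFun π := (⟨reins hj hm π.1 0, by rw [nn_reins]; exact π.2, Rnat_reins hj hm π.1 0⟩,
    Rfin hj hm π.1)
  invFun q := ⟨reins hj hm q.1.1 q.2, by rw [nn_reins]; exact q.1.2.1⟩
  left_inv π := by
    apply Subtype.ext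
    simp only
    rw [reins_reins, reins_Rfin]
  right_inv q := by
    ext : 1
    · apply Subtype.ext
      simp only
      rw [reins_reins, ← Rfin_eq_zero_of_Rnat hj hm q.1.2.2, reins_Rfin]
    · simp only
      rw [Rfin_reins]

variable (m j) in
/-- The equivalence showing `|B| = |Abar| * (s+1)`. -/
def eqB (s : ℕ) (hj : 1 ≤ j) (hm : j + 1 ≤ m) (hs : s ≤ j - 1) :
    {π : Equiv.Perm (Fin m) // nn m j hm π = s ∧ π (aa m j hm) < π (zz m j hm)} ≃
      {π : Equiv.Perm (Fin m) // nn m j hm π = s ∧ Rnat m j hm π = 0} × Fin (s + 1) where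
  toFun π := (⟨reins hj hm π.1 0, by rw [nn_reins]; exact π.2.1, Rnat_reins hj hm π.1 0⟩,
    ⟨Rnat m j hm π.1, by
      have h1 := (below_iff hj hm π.1).1 π.2.2
      have h2 := π.2.1
      omega⟩)
  invFun q := ⟨reins hj hm q.1.1 ⟨(q.2 : ℕ), by omega⟩, by
    constructor
    · rw [nn_reins]; exact q.1.2.1
    · rw [below_iff hj hm, Rnat_reins, nn_reins, q.1.2.1]
      simp only [Fin.val_mk]
      have := q.2.isLt
      omega⟩
  left_inv π := by
    apply Subtype.ext
    simp only
    rw [reins_reins]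
    rw [show (⟨Rnat m j hm π.1, _⟩ : Fin (j + 1)) = Rfin hj hm π.1 from
      Fin.ext (Rnat_eq_Rfin hj hm π.1)]
    rw [reins_Rfin]
  right_inv q := by
    ext : 1
    · apply Subtype.ext
      simp only
      rw [reins_reins, ← Rfin_eq_zero_of_Rnat hj hm q.1.2.2, reins_Rfin]
    · apply Fin.ext
      simp only
      rw [Rnat_reins]

variable (m j) in
def fval (s v : ℕ) : ℕ :=
  if v = j - 1 then 0 else if v = m - 1 then s + 1
  else if v < s then v + 1 else if v < j - 1 then v + 2 else v + 1

variable (m j) in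
def gval (s w : ℕ) : ℕ :=
  if w = 0 then j - 1 else if w = s + 1 then m - 1
  else if w ≤ s then w - 1 else if w ≤ j then w - 2 else w - 1

set_option maxHeartbeats 1000000 in
variable (m j) in
def pi0 (s : ℕ) (hj : 1 ≤ j) (hm : j + 1 ≤ m) (hs : s ≤ j - 1) : Equiv.Perm (Fin m) where
  toFun v := ⟨fval m j s v.1, by
    have := v.isLt
    simp only [fval]; split_ifs <;> first | exact False.elim (by assumption) | omega⟩
  invFun w := ⟨gval m j s w.1, by
    have := w.isLt
    simp only [gval]; split_ifs <;> first | exact False.elim (by assumption) | omega⟩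
  left_inv v := by
    apply Fin.ext
    have := v.isLt
    simp only [fval, gval]
    split_ifs <;> first | exact False.elim (by assumption) | omega
  right_inv w := by
    apply Fin.ext
    have := w.isLt
    simp only [fval, gval]
    split_ifs <;> first | exact False.elim (by assumption) | omega

lemma pi0_apply (s : ℕ) (hj : 1 ≤ j) (hm : j + 1 ≤ m) (hs : s ≤ j - 1) (v : Fin m) :
    pi0 m j s hj hm hs v = ⟨fval m j s v.1, (pi0 m j s hj hm hs v).isLt⟩ := rfl

lemma nn_pi0 (s : ℕ) (hj : 1 ≤ j) (hm : j + 1 ≤ m) (hs : s ≤ j - 1) :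
    nn m j hm (pi0 m j s hj hm hs) = s := by
  have key : ∀ c : Fin m,
      ((c : ℕ) < j - 1 ∧ pi0 m j s hj hm hs c < pi0 m j s hj hm hs (zz m j hm)) ↔
        (c : ℕ) < s := by
    intro c
    have hc := c.isLt
    have happ : ∀ v : Fin m, ((pi0 m j s hj hm hs) v : ℕ) = fval m j s v.1 := fun _ => rfl
    rw [Fin.lt_def, happ, happ, show ((zz m j hm : Fin m) : ℕ) = m - 1 from rfl]
    simp only [fval]
    split_ifs <;> first | exact False.elim (by assumption) | omega
  rw [nn, Finset.filter_congr (fun c _ => key c), card_filter_val_lt m s (by omega)]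

lemma Rnat_pi0 (s : ℕ) (hj : 1 ≤ j) (hm : j + 1 ≤ m) (hs : s ≤ j - 1) :
    Rnat m j hm (pi0 m j s hj hm hs) = 0 := by
  rw [Rnat, Finset.card_eq_zero, Finset.filter_eq_empty_iff]
  intro i _
  rintro ⟨-, hlt⟩
  have happ : ∀ v : Fin m, ((pi0 m j s hj hm hs) v : ℕ) = fval m j s v.1 := fun _ => rfl
  rw [Fin.lt_def, happ, happ, show ((aa m j hm : Fin m) : ℕ) = j - 1 from rfl] at hlt
  have : fval m j s (j - 1) = 0 := by simp [fval]
  omega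

end Stmt7Aux

/-- Conditioned on exactly `s` of the items `C_1, …, C_{j−1}` (indices `0, …, j−2`)
preceding `C_m` (index `m−1`) in a uniformly random permutation of `m` items, the
probability that `C_j` (index `j−1`) also precedes `C_m` equals `(s+1)/(j+1)`. -/
theorem stmt7 (m j s : ℕ) (hj : 1 ≤ j) (hjm : j ≤ m - 1) (hs : s ≤ j - 1) :
    (Nat.card {π : Equiv.Perm (Fin m) //
        (Finset.univ.filter
          (fun c : Fin m => (c : ℕ) < j - 1 ∧ π c < π ⟨m - 1, by omega⟩)).card = s ∧
        π ⟨j - 1, by omega⟩ < π ⟨m - 1, by omega⟩} : ℝ) /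
      (Nat.card {π : Equiv.Perm (Fin m) //
        (Finset.univ.filter
          (fun c : Fin m => (c : ℕ) < j - 1 ∧ π c < π ⟨m - 1, by omega⟩)).card = s} : ℝ) =
    ((s : ℝ) + 1) / ((j : ℝ) + 1) := by
  have hm : j + 1 ≤ m := by omega
  classical
  set K := Nat.card {π : Equiv.Perm (Fin m) //
    Stmt7Aux.nn m j hm π = s ∧ Stmt7Aux.Rnat m j hm π = 0} with hK
  have cardA : Nat.card {π : Equiv.Perm (Fin m) // Stmt7Aux.nn m j hm π = s}
      = K * (j + 1) := by
    rw [Nat.card_congr (Stmt7Aux.eqA m j s hj hm), Nat.card_prod]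
    congr 1
    simp [Nat.card_eq_fintype_card]
  have cardB : Nat.card {π : Equiv.Perm (Fin m) //
      Stmt7Aux.nn m j hm π = s ∧ π (Stmt7Aux.aa m j hm) < π (Stmt7Aux.zz m j hm)}
      = K * (s + 1) := by
    rw [Nat.card_congr (Stmt7Aux.eqB m j s hj hm hs), Nat.card_prod]
    congr 1
    simp [Nat.card_eq_fintype_card]
  have hKpos : 0 < K := by
    haveI : Nonempty {π : Equiv.Perm (Fin m) //
        Stmt7Aux.nn m j hm π = s ∧ Stmt7Aux.Rnat m j hm π = 0} :=
      ⟨⟨Stmt7Aux.pi0 m j s hj hm hs,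
        Stmt7Aux.nn_pi0 s hj hm hs, Stmt7Aux.Rnat_pi0 s hj hm hs⟩⟩
    exact Nat.card_pos
  show (Nat.card {π : Equiv.Perm (Fin m) //
      Stmt7Aux.nn m j hm π = s ∧ π (Stmt7Aux.aa m j hm) < π (Stmt7Aux.zz m j hm)} : ℝ) /
    (Nat.card {π : Equiv.Perm (Fin m) // Stmt7Aux.nn m j hm π = s} : ℝ) = _
  rw [cardA, cardB]
  have hKne : (K : ℝ) ≠ 0 := Nat.cast_ne_zero.2 hKpos.ne'
  push_cast
  rw [mul_comm (K : ℝ) _, mul_comm (K : ℝ) _, mul_div_mul_right _ _ hKne]
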